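/- Decorrelation increases expected height: let RW be a walk of n steps where steps at positions x < y are perfectly negatively correlated ±1 variables (one is +1 iff the other is -1, each marginally uniform), and all other steps are arbitrary but fixed. Replacing the pair (step_x, step_y) by two independent uniform ±1 variables does not decrease the expected maximum of the walk, E[max_{0 <= j <= n} RW(j)]. -/

import Mathlib

/-- Decorrelation increases the expected height of a walk.  All steps
except those at positions `x ≠ y` are fixed ±1 values given by `s`; `H a b` is the
height (maximum over all partial sums, including the start 0) of the walk whose step
at `x` is `a` and at `y` is `b`.  The expected height when `(step_x, step_y)` is
uniform on `{(+1,-1),(-1,+1)}` (perfectly negatively correlated) is at most the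
expected height when `(step_x, step_y)` is uniform on `{±1}²` (independent). -/
theorem stmt8 (n : ℕ) (x y : Fin n) (hxy : x ≠ y) (s : Fin n → ℤ)
    (hs : ∀ t, t ≠ x → t ≠ y → s t = 1 ∨ s t = -1)
    (H : ℤ → ℤ → ℤ)
    (hH : ∀ a b, H a b = (Finset.range (n+1)).sup' ⟨0, Finset.mem_range.mpr (Nat.succ_pos n)⟩
      (fun j => ∑ t ∈ Finset.univ.filter (fun t : Fin n => (t : ℕ) < j),
        Function.update (Function.update s x a) y b t)) :
    ((H 1 (-1) + H (-1) 1 : ℤ) : ℝ) / 2 ≤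
      ((H 1 1 + H 1 (-1) + H (-1) 1 + H (-1) (-1) : ℤ) : ℝ) / 4 := by
  set F : ℤ → ℤ → ℕ → ℤ := fun a b j =>
    ∑ t ∈ Finset.univ.filter (fun t : Fin n => (t : ℕ) < j),
      Function.update (Function.update s x a) y b t with hF
  have hH' : ∀ a b, H a b = (Finset.range (n+1)).sup' Finset.nonempty_range_add_one (F a b) :=
    fun a b => hH a b
  have key : ∀ (a b : ℤ) (j : ℕ), F a b j =
      (∑ t ∈ Finset.univ.filter (fun t : Fin n => (t : ℕ) < j),
        if t = x ∨ t = y then 0 else s t)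
      + (if (x : ℕ) < j then a else 0) + (if (y : ℕ) < j then b else 0) := by
    intro a b j
    have hpt : ∀ t : Fin n, Function.update (Function.update s x a) y b t =
        (if t = x ∨ t = y then 0 else s t) + (if t = x then a else 0)
          + (if t = y then b else 0) := by
      intro t
      rcases eq_or_ne t y with rfl | hty
      · simp [Function.update_apply, hxy.symm]
      · rcases eq_or_ne t x with rfl | htx
        · simp [Function.update_apply, hty]
        · simp [Function.update_apply, hty, htx]
    have : F a b j = ∑ t ∈ Finset.univ.filter (fun t : Fin n => (t : ℕ) < j),
        ((if t = x ∨ t = y then 0 else s t) + (if t = x then a else 0)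
          + (if t = y then b else 0)) :=
      Finset.sum_congr rfl (fun t _ => hpt t)
    rw [this, Finset.sum_add_distrib, Finset.sum_add_distrib,
      Finset.sum_ite_eq' _ x (fun _ => a), Finset.sum_ite_eq' _ y (fun _ => b)]
    simp [Finset.mem_filter]
  obtain ⟨j1, hj1m, hj1⟩ :=
    Finset.exists_mem_eq_sup' (Finset.nonempty_range_add_one (n := n)) (F 1 (-1))
  obtain ⟨j2, hj2m, hj2⟩ :=
    Finset.exists_mem_eq_sup' (Finset.nonempty_range_add_one (n := n)) (F (-1) 1)
  have up : ∀ (a b : ℤ) (j : ℕ), j ∈ Finset.range (n+1) → F a b j ≤ H a b := by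
    intro a b j hj
    rw [hH']
    exact Finset.le_sup' _ hj
  have e1 : H 1 (-1) = F 1 (-1) j1 := by rw [hH']; exact hj1
  have e2 : H (-1) 1 = F (-1) 1 j2 := by rw [hH']; exact hj2
  have choice : F 1 (-1) j1 + F (-1) 1 j2 ≤ F 1 1 j1 + F (-1) (-1) j2 ∨
      F 1 (-1) j1 + F (-1) 1 j2 ≤ F 1 1 j2 + F (-1) (-1) j1 := by
    rw [key 1 (-1) j1, key (-1) 1 j2, key 1 1 j1, key (-1) (-1) j2,
      key 1 1 j2, key (-1) (-1) j1]
    split_ifs <;> omega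
  have hkey : H 1 (-1) + H (-1) 1 ≤ H 1 1 + H (-1) (-1) := by
    rw [e1, e2]
    rcases choice with h | h
    · exact h.trans (add_le_add (up _ _ _ hj1m) (up _ _ _ hj2m))
    · exact h.trans (add_le_add (up _ _ _ hj2m) (up _ _ _ hj1m))
  have hkeyR : ((H 1 (-1) : ℝ) + H (-1) 1) ≤ (H 1 1 : ℝ) + H (-1) (-1) := by
    exact_mod_cast hkey
  push_cast
  linarith
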